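/- Let X be a topological space and κ a cardinal such that πw(X) < cf(κ) ≤ κ ≤ w(X). Then X has no κ^op-like base; in particular, the Noetherian type of X is greater than κ. -/

import Mathlib

open Cardinal Set TopologicalSpace

universe u

/-- A family `B` of subsets of a space is `κ`-op-like if every member of `B`
has fewer than `κ`-many supersets in `B`. -/
def OpLike {X : Type u} (κ : Cardinal.{u}) (B : Set (Set X)) : Prop :=
  ∀ U ∈ B, #{V ∈ B | U ⊆ V} < κ

/-- The Noetherian type of a space: the least infinite `κ` such that the space
has a `κ`-op-like base. -/
noncomputable def NoetherianType (X : Type u) [TopologicalSpace X] : Cardinal.{u} :=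
  sInf {κ : Cardinal.{u} | ℵ₀ ≤ κ ∧ ∃ B : Set (Set X), IsTopologicalBasis B ∧ OpLike κ B}

/-- The weight of a space: the least infinite `κ` such that the space has
a base of cardinality at most `κ`. -/
noncomputable def Weight (X : Type u) [TopologicalSpace X] : Cardinal.{u} :=
  sInf {κ : Cardinal.{u} | ℵ₀ ≤ κ ∧ ∃ B : Set (Set X), IsTopologicalBasis B ∧ #B ≤ κ}

/-- A π-base: a family of nonempty open sets such that every nonempty open set
contains a member of the family. -/
def IsPiBase {X : Type u} [TopologicalSpace X] (B : Set (Set X)) : Prop :=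
  (∀ U ∈ B, IsOpen U ∧ U.Nonempty) ∧
    ∀ U : Set X, IsOpen U → U.Nonempty → ∃ V ∈ B, V ⊆ U

/-- The π-weight of a space: the least infinite `κ` such that the space has
a π-base of cardinality at most `κ`. -/
noncomputable def PiWeight (X : Type u) [TopologicalSpace X] : Cardinal.{u} :=
  sInf {κ : Cardinal.{u} | ℵ₀ ≤ κ ∧ ∃ B : Set (Set X), IsPiBase B ∧ #B ≤ κ}

/-- The density of a space: the least infinite `κ` such that the space has
a dense subset of cardinality at most `κ`. -/
noncomputable def Density (X : Type u) [TopologicalSpace X] : Cardinal.{u} :=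
  sInf {κ : Cardinal.{u} | ℵ₀ ≤ κ ∧ ∃ D : Set X, Dense D ∧ #D ≤ κ}

/-- A GO-space: a linearly ordered set whose topology is induced by an order
embedding into some linearly ordered topological space (a linear order with
its order topology). -/
def IsGOSpace (X : Type u) [LinearOrder X] [tX : TopologicalSpace X] : Prop :=
  ∃ (Y : Type u) (lo : LinearOrder Y) (e : X → Y),
    @StrictMono X Y _ lo.toPartialOrder.toPreorder e ∧
    tX = TopologicalSpace.induced e (@Preorder.topology Y lo.toPartialOrder.toPreorder)

/-- A space is `μ`-compact if every open cover has a subcover of cardinality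
less than `μ`. -/
def MuCompact (μ : Cardinal.{u}) (X : Type u) [TopologicalSpace X] : Prop :=
  ∀ 𝒰 : Set (Set X), (∀ U ∈ 𝒰, IsOpen U) → ⋃₀ 𝒰 = Set.univ →
    ∃ 𝒱 ⊆ 𝒰, #𝒱 < μ ∧ ⋃₀ 𝒱 = Set.univ

/-- A cardinal is weakly inaccessible if it is uncountable, regular, and
a limit cardinal. -/
def IsWeaklyInaccessible (κ : Cardinal.{u}) : Prop :=
  ℵ₀ < κ ∧ κ.IsRegular ∧ ∀ μ < κ, Order.succ μ < κ

/-- If `πw(X) < cf(κ) ≤ κ ≤ w(X)`, then `X` has no `κ`-op-like base;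
in particular `Nt(X) > κ`. -/
theorem statement0 {X : Type u} [TopologicalSpace X] (κ : Cardinal.{u})
    (h1 : PiWeight X < κ.ord.cof) (h2 : κ.ord.cof ≤ κ) (h3 : κ ≤ Weight X) :
    (¬ ∃ B : Set (Set X), IsTopologicalBasis B ∧ OpLike κ B) ∧
    κ < NoetherianType X := by
  have hPi_ne : {c : Cardinal.{u} | ℵ₀ ≤ c ∧ ∃ B : Set (Set X), IsPiBase B ∧ #B ≤ c}.Nonempty :=
    ⟨max ℵ₀ #(Set X), le_max_left _ _, {U | IsOpen U ∧ U.Nonempty},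
      ⟨fun _ hU => hU, fun U hU hU' => ⟨U, ⟨hU, hU'⟩, subset_rfl⟩⟩,
      le_trans (mk_set_le _) (le_max_right _ _)⟩
  have hPiω : ℵ₀ ≤ PiWeight X := le_csInf hPi_ne fun _ hb => hb.1
  have hκω : ℵ₀ < κ := lt_of_lt_of_le (lt_of_le_of_lt hPiω h1) h2
  obtain ⟨-, P, hP, hPle⟩ := csInf_mem hPi_ne
  have hPle' : #P < κ.ord.cof := lt_of_le_of_lt hPle h1
  have part1 : ¬ ∃ B : Set (Set X), IsTopologicalBasis B ∧ OpLike κ B := by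
    rintro ⟨B, hB, hop⟩
    have hBκ : κ ≤ #B := by
      by_contra hlt
      push_neg at hlt
      have hw : Weight X ≤ max ℵ₀ #B :=
        csInf_le' ⟨le_max_left _ _, B, hB, le_max_right _ _⟩
      exact absurd h3 (not_le.mpr (lt_of_le_of_lt hw (max_lt hκω hlt)))
    set B' : Set (Set X) := {U ∈ B | U.Nonempty} with hB'def
    have hBsub : B ⊆ B' ∪ {∅} := by
      intro U hU
      rcases U.eq_empty_or_nonempty with h | h
      · right; exact h
      · left; exact ⟨hU, h⟩
    have hB'κ : κ ≤ #B' := by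
      by_contra hlt
      push_neg at hlt
      have h1' : #B ≤ #B' + 1 := by
        refine le_trans (mk_le_mk_of_subset hBsub) (le_trans (mk_union_le _ _) ?_)
        simp
      have hone : (1 : Cardinal) < κ := lt_trans one_lt_aleph0 hκω
      exact absurd hBκ (not_le.mpr (lt_of_le_of_lt h1'
        (Cardinal.add_lt_of_lt hκω.le hlt hone)))
    have key : ∃ p ∈ P, κ ≤ #{U ∈ B' | p ⊆ U} := by
      by_contra hno
      push_neg at hno
      have hcover : B' ⊆ ⋃ p : P, {U ∈ B' | (p : Set X) ⊆ U} := by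
        rintro U ⟨hUB, hUne⟩
        obtain ⟨p, hpP, hpU⟩ := hP.2 U (hB.isOpen hUB) hUne
        exact mem_iUnion.mpr ⟨⟨p, hpP⟩, ⟨⟨hUB, hUne⟩, hpU⟩⟩
      have hle1 : #B' ≤ Cardinal.sum (fun p : P => #{U ∈ B' | (p : Set X) ⊆ U}) :=
        (mk_le_mk_of_subset hcover).trans mk_iUnion_le_sum_mk
      have hsup : (⨆ p : P, #{U ∈ B' | (p : Set X) ⊆ U}) < κ :=
        Ordinal.iSup_lt hPle' (fun p => hno p p.2)
      have hfin : #B' < κ :=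
        hle1.trans_lt ((Cardinal.sum_le_mk_mul_iSup _).trans_lt
          (Cardinal.mul_lt_of_lt hκω.le (lt_of_lt_of_le hPle' h2) hsup))
      exact absurd hB'κ (not_le.mpr hfin)
    obtain ⟨p, hpP, hpκ⟩ := key
    obtain ⟨hpo, x, hx⟩ := hP.1 p hpP
    obtain ⟨W, hWB, _, hWp⟩ := hB.exists_subset_of_mem_open hx hpo
    have hsub : {U ∈ B' | p ⊆ U} ⊆ {V ∈ B | W ⊆ V} :=
      fun V hV => ⟨hV.1.1, hWp.trans hV.2⟩
    exact absurd (hop W hWB) (not_lt.mpr (hpκ.trans (mk_le_mk_of_subset hsub)))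
  refine ⟨part1, ?_⟩
  have hNt_ne : {c : Cardinal.{u} | ℵ₀ ≤ c ∧
      ∃ B : Set (Set X), IsTopologicalBasis B ∧ OpLike c B}.Nonempty :=
    ⟨Order.succ (max ℵ₀ #(Set X)), (le_max_left _ _).trans (Order.le_succ _),
      {U | IsOpen U}, isTopologicalBasis_opens,
      fun U _ => lt_of_le_of_lt ((mk_set_le _).trans (le_max_right _ _)) (Order.lt_succ _)⟩
  obtain ⟨-, B, hB, hop⟩ := csInf_mem hNt_ne
  by_contra hle
  push_neg at hle
  exact part1 ⟨B, hB, fun U hU => lt_of_lt_of_le (hop U hU) hle⟩
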